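/- Let R be an integral domain and I a molecule of R such that R/I is Artinian. Then I is a primary ideal of R. -/

import Mathlib

/-- A molecule `I` of a domain with `R/I` Artinian is a primary ideal. -/
theorem stmt_11 {R : Type*} [CommRing R] [IsDomain R] (I : Ideal R)
    (hne : I ≠ ⊥) (hproper : I ≠ ⊤)
    (hmol : ∀ A B : Ideal R, I = A * B → A = ⊤ ∨ B = ⊤)
    (hart : IsArtinianRing (R ⧸ I)) :
    I.IsPrimary := by
  classical
  set S := R ⧸ I
  set mk := Ideal.Quotient.mk I with hmkdef
  have hsurj : Function.Surjective mk := Ideal.Quotient.mk_surjective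
  have hker : RingHom.ker mk = I := Ideal.mk_ker
  haveI : Nontrivial S := Ideal.Quotient.nontrivial_iff.mpr hproper
  -- uniqueness of maximal ideals of S
  have huniq : ∀ n₁ n₂ : Ideal S, n₁.IsMaximal → n₂.IsMaximal → n₁ = n₂ := by
    intro n₁ n₂ hm1 hm2
    by_contra hne12
    obtain ⟨k, hk⟩ := IsArtinianRing.isNilpotent_jacobson_bot (R := S)
    have hk' : (Ideal.jacobson (⊥ : Ideal S)) ^ (k + 1) = ⊥ := by
      rw [pow_succ, hk, zero_mul]; rfl
    set e := k + 1 with he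
    have Mfin := IsArtinianRing.setOfPred_isMaximal_finite S
    set M : Finset (Ideal S) := Mfin.toFinset with hM
    have hmemM : ∀ m : Ideal S, m ∈ M ↔ m.IsMaximal := by
      intro m; simp [hM, Set.Finite.mem_toFinset]
    set X : Ideal S := (M.erase n₁).inf id with hX
    have hXn2 : X ≤ n₂ := Finset.inf_le (by
      rw [Finset.mem_erase]; exact ⟨Ne.symm hne12, (hmemM n₂).mpr hm2⟩)
    have hXnot : ¬ X ≤ n₁ := by
      intro hle
      obtain ⟨m, hmmem, hmle⟩ := hm1.isPrime.inf_le'.mp hle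
      rw [Finset.mem_erase] at hmmem
      exact hmmem.1 (((hmemM m).mp hmmem.2).eq_of_le hm1.ne_top hmle)
    have hsup : n₁ ⊔ X = ⊤ := by
      by_contra htop
      exact hXnot (le_sup_right.trans (hm1.eq_of_le htop le_sup_left).ge)
    have hjac : n₁ ⊓ X ≤ Ideal.jacobson (⊥ : Ideal S) := by
      apply le_sInf
      rintro m ⟨-, hm⟩
      by_cases hcase : m = n₁
      · exact hcase ▸ inf_le_left.trans le_rfl
      · exact le_trans inf_le_right (Finset.inf_le (by
          rw [Finset.mem_erase]; exact ⟨hcase, (hmemM m).mpr hm⟩))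
    have hcop : IsCoprime (n₁ ^ e) (X ^ e) :=
      (Ideal.isCoprime_iff_sup_eq.mpr hsup).pow
    have hbot : n₁ ^ e * X ^ e = ⊥ := by
      apply le_antisymm _ bot_le
      calc n₁ ^ e * X ^ e = (n₁ * X) ^ e := (mul_pow _ _ _).symm
        _ ≤ (n₁ ⊓ X) ^ e := pow_le_pow_left' Ideal.mul_le_inf _
        _ ≤ (Ideal.jacobson (⊥ : Ideal S)) ^ e := pow_le_pow_left' hjac _
        _ = ⊥ := hk'
    set A : Ideal R := Ideal.comap mk (n₁ ^ e) with hA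
    set B : Ideal R := Ideal.comap mk (X ^ e) with hB
    have hIA : I ≤ A := hker ▸ Ideal.comap_mono bot_le
    have hIB : I ≤ B := hker ▸ Ideal.comap_mono bot_le
    have hsupAB : A ⊔ B = ⊤ := by
      rw [Ideal.eq_top_iff_one]
      have h1 : (1 : S) ∈ n₁ ^ e ⊔ X ^ e := by
        rw [Ideal.isCoprime_iff_sup_eq.mp hcop]; trivial
      obtain ⟨a, ha, b, hb, hab⟩ := Submodule.mem_sup.mp h1
      obtain ⟨x, rfl⟩ := hsurj a
      obtain ⟨y, rfl⟩ := hsurj b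
      have hxy : (1 : R) - (x + y) ∈ I := by
        rw [← hker, RingHom.mem_ker]
        simp [map_sub, map_add, hab]
      have : (1 : R) = ((1 : R) - (x + y)) + x + y := by ring
      rw [this]
      exact add_mem (add_mem (Submodule.mem_sup_left (hIA hxy))
        (Submodule.mem_sup_left ha)) (Submodule.mem_sup_right hb)
    have hABI : I = A * B := by
      rw [Ideal.mul_eq_inf_of_coprime hsupAB, hA, hB, ← Ideal.comap_inf,
        ← Ideal.mul_eq_inf_of_coprime hcop.sup_eq, hbot, ← RingHom.ker_eq_comap_bot, hker]
    rcases hmol A B hABI with h | h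
    · have : (1 : S) ∈ n₁ := by
        have : (1 : R) ∈ A := h ▸ trivial
        exact (Ideal.pow_le_self (Nat.succ_ne_zero k)) (by simpa [hA] using this)
      exact hm1.ne_top (Ideal.eq_top_iff_one _ |>.mpr (by simpa using this))
    · have : (1 : S) ∈ n₂ := by
        have : (1 : R) ∈ B := h ▸ trivial
        exact hXn2 ((Ideal.pow_le_self (Nat.succ_ne_zero k)) (by simpa [hB] using this))
      exact hm2.ne_top (Ideal.eq_top_iff_one _ |>.mpr (by simpa using this))
  -- radical of I is maximal
  obtain ⟨m₀, hm0, hIm0⟩ := Ideal.exists_le_maximal I hproper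
  have key : ∀ p : Ideal R, I ≤ p → p.IsPrime → p = m₀ := by
    intro p hIp hp
    have hkerp : RingHom.ker mk ≤ p := hker.le.trans hIp
    have hkerm : RingHom.ker mk ≤ m₀ := hker.le.trans hIm0
    haveI hmapp : (Ideal.map mk p).IsPrime := Ideal.map_isPrime_of_surjective hsurj hkerp
    haveI hmapm : (Ideal.map mk m₀).IsPrime :=
      Ideal.map_isPrime_of_surjective hsurj hkerm
    have heq : Ideal.map mk p = Ideal.map mk m₀ :=
      huniq _ _ (IsArtinianRing.isMaximal_of_isPrime _) (IsArtinianRing.isMaximal_of_isPrime _)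
    have h1 : Ideal.comap mk (Ideal.map mk p) = p := by
      rw [Ideal.comap_map_of_surjective mk hsurj, ← RingHom.ker_eq_comap_bot, hker,
        sup_eq_left.mpr hIp]
    have h2 : Ideal.comap mk (Ideal.map mk m₀) = m₀ := by
      rw [Ideal.comap_map_of_surjective mk hsurj, ← RingHom.ker_eq_comap_bot, hker,
        sup_eq_left.mpr hIm0]
    rw [← h1, heq, h2]
  have hrad : I.radical = m₀ := by
    apply le_antisymm
    · rw [Ideal.radical_eq_sInf]; exact sInf_le ⟨hIm0, hm0.isPrime⟩
    · rw [Ideal.radical_eq_sInf]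
      apply le_sInf
      rintro p ⟨hIp, hp⟩
      exact (key p hIp hp).symm.le
  exact Ideal.isPrimary_of_isMaximal_radical (hrad ▸ hm0)
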